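/- arXiv:2212.02049 — 4 statements merged into one kernel-verified Lean document; each statement's English description precedes it below -/
import Mathlib

section
/- Let $h : \mathbb{R}_{>0} \to \mathbb{R}$ be twice differentiable with $h' > 0$ and $h'' \geq 0$, and fix $\nu > 0$. Define $J(s) = h(\nu) + \nu h'(\nu)\left(1 - \frac{\nu}{s}\right) - h(s)$ for $s > 0$. Then $s = \nu$ is the unique global maximizer of $J$ on $\mathbb{R}_{>0}$; in particular $J(\nu) = 0$ and $J(s) < 0$ for all $s > 0$ with $s \neq \nu$. -/
/-- With `h` twice differentiable, `h' > 0` and `h'' ≥ 0` on `ℝ>0`,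
`s = ν` is the unique global maximizer of `J(s) = h(ν) + ν h'(ν)(1 - ν/s) - h(s)` on
`ℝ>0`: `J(ν) = 0` and `J(s) < 0` for all `s > 0`, `s ≠ ν`. -/
theorem deviation_utility_unique_maximizer
    (h h' h'' : ℝ → ℝ)
    (hd1 : ∀ s > (0:ℝ), HasDerivAt h (h' s) s)
    (hd2 : ∀ s > (0:ℝ), HasDerivAt h' (h'' s) s)
    (hpos : ∀ s > (0:ℝ), 0 < h' s)
    (hconv : ∀ s > (0:ℝ), 0 ≤ h'' s)
    (ν : ℝ) (hν : 0 < ν)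
    (J : ℝ → ℝ) (hJ : ∀ s, J s = h ν + ν * h' ν * (1 - ν / s) - h s) :
    J ν = 0 ∧ ∀ s > (0:ℝ), s ≠ ν → J s < 0 := by
  have hJν : J ν = 0 := by rw [hJ]; field_simp; ring
  refine ⟨hJν, ?_⟩
  -- h' is monotone on Ioi 0
  have hmono : MonotoneOn h' (Set.Ioi 0) := by
    apply monotoneOn_of_deriv_nonneg (convex_Ioi 0)
    · exact fun x hx => (hd2 x hx).continuousAt.continuousWithinAt
    · intro x hx
      rw [interior_Ioi] at hx
      exact (hd2 x hx).differentiableAt.differentiableWithinAt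
    · intro x hx
      rw [interior_Ioi] at hx
      rw [(hd2 x hx).deriv]
      exact hconv x hx
  -- tangent line inequality
  have htang : ∀ s > (0:ℝ), h' ν * (s - ν) ≤ h s - h ν := by
    intro s hs
    rcases lt_trichotomy s ν with hlt | heq | hgt
    · obtain ⟨c, hc, hcd⟩ := exists_hasDerivAt_eq_slope h h' hlt
        (fun x hx => (hd1 x (lt_of_lt_of_le hs hx.1)).continuousAt.continuousWithinAt)
        (fun x hx => hd1 x (lt_trans hs hx.1))
      have hc0 : (0:ℝ) < c := lt_trans hs hc.1
      have hle : h' c ≤ h' ν := hmono (Set.mem_Ioi.mpr hc0) (Set.mem_Ioi.mpr hν) hc.2.le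
      rw [hcd] at hle
      have hd : 0 < ν - s := by linarith
      have := (div_le_iff₀ hd).mp hle
      nlinarith
    · simp [heq]
    · obtain ⟨c, hc, hcd⟩ := exists_hasDerivAt_eq_slope h h' hgt
        (fun x hx => (hd1 x (lt_of_lt_of_le hν hx.1)).continuousAt.continuousWithinAt)
        (fun x hx => hd1 x (lt_trans hν hx.1))
      have hc0 : (0:ℝ) < c := lt_trans hν hc.1
      have hle : h' ν ≤ h' c := hmono (Set.mem_Ioi.mpr hν) (Set.mem_Ioi.mpr hc0) hc.1.le
      rw [hcd] at hle
      have hd : 0 < s - ν := by linarith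
      have := (le_div_iff₀ hd).mp hle
      nlinarith
  intro s hs hne
  rw [hJ]
  have key := htang s hs
  have h1 : 0 < (s - ν)^2 := by
    have : s - ν ≠ 0 := sub_ne_zero.mpr hne
    positivity
  have hp := hpos ν hν
  have hid : ν * h' ν * (1 - ν / s) - h' ν * (s - ν) = -(h' ν * (s - ν)^2 / s) := by
    field_simp
    ring
  have hneg : 0 < h' ν * (s - ν)^2 / s := div_pos (mul_pos hp h1) hs
  linarith
end

section
/- (Budget balance) Let $K \geq 2$ agents have i.i.d.-based stochastic gradients $X_1,\dots,X_K$, independent with common mean $m$ and variances $\mathbb{V}[X_i] = \sigma^2/\nu$ (all agents cooperative with minibatch size $\nu \in \mathbb{Z}_{>0}$, $\sigma^2 > 0$). Let $h:\mathbb{R}_{>0}\to\mathbb{R}$ be differentiable, and define the reward $R_k = h(\nu) + h'(\nu)\left(\nu \frac{K}{K-1} - \frac{\nu^2}{\sigma^2}\|X_k - \widehat m_{-k}\|^2\right)$ with $\widehat m_{-k} = \frac{1}{K-1}\sum_{i\neq k} X_i$. Then $\mathbb{E}[R_k] = h(\nu)$ for every agent $k$. -/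
open MeasureTheory ProbabilityTheory

/-- **Budget balance.** In the cooperative equilibrium (all `K ≥ 2` agents
use minibatch size `ν`, so each gradient has mean `m` and variance `σ²/ν`), the
output-agreement reward
`R_k = h(ν) + h'(ν)(ν K/(K-1) - (ν²/σ²)‖X_k - m̂₋ₖ‖²)` has expectation `h(ν)`. -/
theorem budget_balance
    {Ω : Type*} [MeasurableSpace Ω] (μ : Measure Ω) [IsProbabilityMeasure μ]
    {d K : ℕ} (hK : 2 ≤ K)
    (X : Fin K → Ω → EuclideanSpace ℝ (Fin d))
    (m : EuclideanSpace ℝ (Fin d)) (σ2 : ℝ) (hσ2 : 0 < σ2)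
    (ν : ℕ) (hν : 1 ≤ ν)
    (hmeas : ∀ i, Measurable (X i))
    (hindep : iIndepFun X μ)
    (hint : ∀ i, Integrable (X i) μ)
    (hmean : ∀ i, ∫ ω, X i ω ∂μ = m)
    (hL2 : ∀ i, Integrable (fun ω => ‖X i ω - m‖ ^ 2) μ)
    (hvar : ∀ i, ∫ ω, ‖X i ω - m‖ ^ 2 ∂μ = σ2 / ν)
    (h h' : ℝ → ℝ) (hd : ∀ s > (0:ℝ), HasDerivAt h (h' s) s)
    (k : Fin K) :
    ∫ ω, (h ν + h' ν * (ν * (K / ((K : ℝ) - 1)) -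
        ν ^ 2 / σ2 *
          ‖X k ω - ((K : ℝ) - 1)⁻¹ • ∑ i ∈ Finset.univ.erase k, X i ω‖ ^ 2)) ∂μ
      = h ν := by
  classical
  have hK2 : (2:ℝ) ≤ (K:ℝ) := by exact_mod_cast hK
  have hKne : ((K:ℝ) - 1) ≠ 0 := by linarith
  have hνne : ((ν:ℝ)) ≠ 0 := by positivity
  set c : ℝ := ((K:ℝ) - 1)⁻¹ with hc
  set E := Finset.univ.erase k with hE
  set Y : Fin K → Ω → EuclideanSpace ℝ (Fin d) := fun i ω => X i ω - m with hYdef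
  have hYmeas : ∀ i, Measurable (Y i) := fun i => (hmeas i).sub measurable_const
  have hYint : ∀ i, Integrable (Y i) μ := fun i => (hint i).sub (integrable_const m)
  have hYmean : ∀ i, ∫ ω, Y i ω ∂μ = 0 := fun i => by
    simp [hYdef, integral_sub (hint i) (integrable_const m), hmean i]
  have hYL2 : ∀ i, Integrable (fun ω => ‖Y i ω‖ ^ 2) μ := hL2
  have hYvar : ∀ i, ∫ ω, ‖Y i ω‖ ^ 2 ∂μ = σ2 / ν := hvar
  have hEcard : E.card = K - 1 := by simp [hE]
  have hEcardR : (E.card : ℝ) = (K:ℝ) - 1 := by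
    rw [hEcard, Nat.cast_sub (by omega)]; simp
  -- coordinates
  have hcoordint : ∀ i t, Integrable (fun ω => Y i ω t) μ := fun i t =>
    (EuclideanSpace.proj t : EuclideanSpace ℝ (Fin d) →L[ℝ] ℝ).integrable_comp (hYint i)
  have hcoordmean : ∀ i t, ∫ ω, Y i ω t ∂μ = 0 := fun i t => by
    have := (EuclideanSpace.proj t : EuclideanSpace ℝ (Fin d) →L[ℝ] ℝ).integral_comp_comm (hYint i)
    simpa [hYmean i] using this
  have hindepc : ∀ i j, i ≠ j → ∀ t, IndepFun (fun ω => Y i ω t) (fun ω => Y j ω t) μ := by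
    intro i j hij t
    have h1 : IndepFun (X i) (X j) μ := hindep.indepFun hij
    have hm : Measurable (fun x : EuclideanSpace ℝ (Fin d) =>
        (EuclideanSpace.proj t : EuclideanSpace ℝ (Fin d) →L[ℝ] ℝ) x - m t) :=
      (EuclideanSpace.proj t : EuclideanSpace ℝ (Fin d) →L[ℝ] ℝ).continuous.measurable.sub
        measurable_const
    exact h1.comp hm hm
  -- cross moments
  have hcrossint : ∀ i j, Integrable (fun ω => (inner ℝ (Y i ω) (Y j ω) : ℝ)) μ := by
    intro i j
    have hb : Integrable (fun ω => (‖Y i ω‖ ^ 2 + ‖Y j ω‖ ^ 2) / 2) μ :=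
      ((hYL2 i).add (hYL2 j)).div_const 2
    refine hb.mono' ((hYmeas i).inner (hYmeas j)).aestronglyMeasurable ?_
    filter_upwards with ω
    have h1 : |(inner ℝ (Y i ω) (Y j ω) : ℝ)| ≤ ‖Y i ω‖ * ‖Y j ω‖ := abs_real_inner_le_norm _ _
    rw [Real.norm_eq_abs]
    nlinarith [sq_nonneg (‖Y i ω‖ - ‖Y j ω‖)]
  have hcross : ∀ i j, i ≠ j → ∫ ω, (inner ℝ (Y i ω) (Y j ω) : ℝ) ∂μ = 0 := by
    intro i j hij
    have hrepr : ∀ ω, (inner ℝ (Y i ω) (Y j ω) : ℝ) = ∑ t, Y i ω t * Y j ω t := fun ω => by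
      simp [PiLp.inner_apply, RCLike.inner_apply, mul_comm]
    simp_rw [hrepr]
    have hintprod : ∀ t : Fin d, Integrable (fun ω => Y i ω t * Y j ω t) μ := fun t =>
      (hindepc i j hij t).integrable_mul (hcoordint i t) (hcoordint j t)
    rw [integral_finset_sum _ (fun t _ => hintprod t)]
    refine Finset.sum_eq_zero fun t _ => ?_
    have := (hindepc i j hij t).integral_fun_mul_eq_mul_integral (hcoordint i t).aestronglyMeasurable (hcoordint j t).aestronglyMeasurable
    simpa [hcoordmean i t, hcoordmean j t] using this
  have hself : ∀ i, ∫ ω, (inner ℝ (Y i ω) (Y i ω) : ℝ) ∂μ = σ2 / ν := fun i => by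
    simp_rw [real_inner_self_eq_norm_sq]
    exact hYvar i
  -- pointwise reduction to centered variables
  have hpoint : ∀ ω, X k ω - c • ∑ i ∈ E, X i ω = Y k ω - c • ∑ i ∈ E, Y i ω := by
    intro ω
    have hdsum : ∑ i ∈ E, X i ω - ∑ i ∈ E, Y i ω = (E.card : ℝ) • m := by
      rw [← Finset.sum_sub_distrib]
      rw [Finset.sum_congr rfl (fun i _ => show X i ω - Y i ω = m by simp [hYdef])]
      rw [Finset.sum_const, Nat.cast_smul_eq_nsmul]
    have h1 : c • ((E.card : ℝ) • m) = m := by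
      rw [smul_smul, hEcardR, hc, inv_mul_cancel₀ hKne, one_smul]
    have h2 : ∑ i ∈ E, X i ω = ∑ i ∈ E, Y i ω + (E.card : ℝ) • m := by
      rw [← hdsum]; abel
    rw [h2, smul_add, h1]
    simp only [hYdef]
    abel
  -- expansion of the squared norm
  have hexpand : ∀ ω, ‖Y k ω - c • ∑ i ∈ E, Y i ω‖ ^ 2
      = ‖Y k ω‖ ^ 2 - (2 * c) * (∑ i ∈ E, (inner ℝ (Y k ω) (Y i ω) : ℝ))
        + c ^ 2 * ∑ i ∈ E, ∑ j ∈ E, (inner ℝ (Y i ω) (Y j ω) : ℝ) := by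
    intro ω
    rw [norm_sub_sq_real, real_inner_smul_right, norm_smul, mul_pow, Real.norm_eq_abs, sq_abs,
      ← real_inner_self_eq_norm_sq (∑ i ∈ E, Y i ω), sum_inner]
    simp_rw [inner_sum]
    ring
  -- integrals
  have hsingle : ∫ ω, (∑ i ∈ E, (inner ℝ (Y k ω) (Y i ω) : ℝ)) ∂μ = 0 := by
    rw [integral_finset_sum _ (fun i _ => hcrossint k i)]
    refine Finset.sum_eq_zero fun i hi => ?_
    exact hcross k i (fun e => (Finset.ne_of_mem_erase hi) e.symm)
  have hdouble : ∫ ω, (∑ i ∈ E, ∑ j ∈ E, (inner ℝ (Y i ω) (Y j ω) : ℝ)) ∂μ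
      = ((K:ℝ) - 1) * (σ2 / ν) := by
    rw [integral_finset_sum _ (fun i _ => integrable_finset_sum E fun j _ => hcrossint i j)]
    have hrow : ∀ i ∈ E, ∫ ω, (∑ j ∈ E, (inner ℝ (Y i ω) (Y j ω) : ℝ)) ∂μ = σ2 / ν := by
      intro i hi
      rw [integral_finset_sum _ (fun j _ => hcrossint i j)]
      rw [Finset.sum_eq_single i (fun j _ hji => hcross i j (Ne.symm hji))
        (fun hi' => absurd hi hi')]
      exact hself i
    rw [Finset.sum_congr rfl hrow, Finset.sum_const, nsmul_eq_mul, hEcardR]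
  have I2 : Integrable (fun ω => (2 * c) * (∑ i ∈ E, (inner ℝ (Y k ω) (Y i ω) : ℝ))) μ :=
    (integrable_finset_sum E fun i _ => hcrossint k i).const_mul _
  have I3 : Integrable
      (fun ω => c ^ 2 * ∑ i ∈ E, ∑ j ∈ E, (inner ℝ (Y i ω) (Y j ω) : ℝ)) μ :=
    (integrable_finset_sum E fun i _ => integrable_finset_sum E fun j _ => hcrossint i j).const_mul _
  have I23 : Integrable (fun ω => ‖Y k ω‖ ^ 2
      - (2 * c) * (∑ i ∈ E, (inner ℝ (Y k ω) (Y i ω) : ℝ))) μ := (hYL2 k).sub I2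
  have hQ : ∫ ω, ‖Y k ω - c • ∑ i ∈ E, Y i ω‖ ^ 2 ∂μ = σ2 / ν * ((K:ℝ) / ((K:ℝ) - 1)) := by
    simp_rw [hexpand]
    rw [integral_add I23 I3, integral_sub (hYL2 k) I2, integral_const_mul,
      integral_const_mul, hYvar k, hsingle, hdouble]
    have hKne' : (-1 + (K:ℝ)) ≠ 0 := by linarith
    rw [hc]
    field_simp
    ring
  have hQint : Integrable (fun ω => ‖Y k ω - c • ∑ i ∈ E, Y i ω‖ ^ 2) μ := by
    simp_rw [hexpand]
    exact I23.add I3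
  have key : ∫ ω, ‖X k ω - c • ∑ i ∈ E, X i ω‖ ^ 2 ∂μ = σ2 / ν * ((K:ℝ) / ((K:ℝ) - 1)) := by
    simp_rw [hpoint]; exact hQ
  have hXQint : Integrable (fun ω => ‖X k ω - c • ∑ i ∈ E, X i ω‖ ^ 2) μ := by
    simp_rw [hpoint]; exact hQint
  have J1 : Integrable (fun ω => (ν:ℝ) ^ 2 / σ2 * ‖X k ω - c • ∑ i ∈ E, X i ω‖ ^ 2) μ :=
    hXQint.const_mul _
  have J2 : Integrable (fun ω => (ν:ℝ) * ((K:ℝ) / ((K:ℝ) - 1))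
      - (ν:ℝ) ^ 2 / σ2 * ‖X k ω - c • ∑ i ∈ E, X i ω‖ ^ 2) μ := (integrable_const _).sub J1
  have J3 : Integrable (fun ω => h' (ν:ℝ) * ((ν:ℝ) * ((K:ℝ) / ((K:ℝ) - 1))
      - (ν:ℝ) ^ 2 / σ2 * ‖X k ω - c • ∑ i ∈ E, X i ω‖ ^ 2)) μ := J2.const_mul _
  rw [integral_add (integrable_const _) J3,
    integral_const, integral_const_mul,
    integral_sub (integrable_const _) J1,
    integral_const, integral_const_mul, key]
  simp only [measure_univ, ENNReal.toReal_one, smul_eq_mul, one_mul, probReal_univ]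
  have hz : (ν:ℝ) * ((K:ℝ) / ((K:ℝ) - 1))
      - (ν:ℝ) ^ 2 / σ2 * (σ2 / (ν:ℝ) * ((K:ℝ) / ((K:ℝ) - 1))) = 0 := by
    field_simp
    ring
  rw [hz, mul_zero, add_zero]
end

section
/- Let $K \geq 2$, $\sigma^2 > 0$, $\nu \in \mathbb{Z}_{>0}$, and let $X_1,\dots,X_K$ be independent random vectors in $\mathbb{R}^d$ with common mean $m$, where $\mathbb{V}[X_k] = \sigma^2/s$ for some integer $s \geq 1$ and $\mathbb{V}[X_i] = \sigma^2/\nu$ for all $i \neq k$. Let $h:\mathbb{R}_{>0}\to\mathbb{R}$ be differentiable, $\widehat m_{-k} = \frac{1}{K-1}\sum_{i\neq k}X_i$, and $R_k = h(\nu) + h'(\nu)\left(\nu\frac{K}{K-1} - \frac{\nu^2}{\sigma^2}\|X_k - \widehat m_{-k}\|^2\right)$. Then the expected utility $u_k = \mathbb{E}[R_k] - h(s)$ equals $h(\nu) + \nu h'(\nu)(1 - \nu/s) - h(s)$. -/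
open MeasureTheory ProbabilityTheory

/-- If agent `k` deviates to minibatch size `s` (variance `σ²/s`) while
all other agents use `ν` (variance `σ²/ν`), his expected utility
`u_k = 𝔼[R_k] - h(s)` equals `h(ν) + ν h'(ν)(1 - ν/s) - h(s)`. -/
theorem deviation_expected_utility
    {Ω : Type*} [MeasurableSpace Ω] (μ : Measure Ω) [IsProbabilityMeasure μ]
    {d K : ℕ} (hK : 2 ≤ K)
    (X : Fin K → Ω → EuclideanSpace ℝ (Fin d))
    (m : EuclideanSpace ℝ (Fin d)) (σ2 : ℝ) (hσ2 : 0 < σ2)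
    (ν s : ℕ) (hν : 1 ≤ ν) (hs : 1 ≤ s)
    (k : Fin K)
    (hmeas : ∀ i, Measurable (X i))
    (hindep : iIndepFun X μ)
    (hint : ∀ i, Integrable (X i) μ)
    (hmean : ∀ i, ∫ ω, X i ω ∂μ = m)
    (hL2 : ∀ i, Integrable (fun ω => ‖X i ω - m‖ ^ 2) μ)
    (hvark : ∫ ω, ‖X k ω - m‖ ^ 2 ∂μ = σ2 / s)
    (hvar : ∀ i, i ≠ k → ∫ ω, ‖X i ω - m‖ ^ 2 ∂μ = σ2 / ν)
    (h h' : ℝ → ℝ) (hd : ∀ t > (0:ℝ), HasDerivAt h (h' t) t) :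
    (∫ ω, (h ν + h' ν * (ν * (K / ((K : ℝ) - 1)) -
        ν ^ 2 / σ2 *
          ‖X k ω - ((K : ℝ) - 1)⁻¹ • ∑ i ∈ Finset.univ.erase k, X i ω‖ ^ 2)) ∂μ)
      - h s
      = h ν + ν * h' ν * (1 - (ν : ℝ) / s) - h s := by
  have hK1 : ((K : ℝ) - 1) ≠ 0 := by
    have : (2:ℝ) ≤ (K:ℝ) := by exact_mod_cast hK
    linarith
  have hsne : ((s:ℝ)) ≠ 0 := by positivity
  have hνne : ((ν:ℝ)) ≠ 0 := by positivity
  set c : ℝ := ((K : ℝ) - 1)⁻¹ with hc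
  set Z : Fin K → Ω → EuclideanSpace ℝ (Fin d) := fun i ω => X i ω - m with hZdef
  have hZint : ∀ i, Integrable (Z i) μ := fun i => (hint i).sub (integrable_const m)
  have hZmean : ∀ i, ∫ ω, Z i ω ∂μ = 0 := by
    intro i
    rw [show Z i = fun ω => X i ω - m from rfl]
    rw [integral_sub (hint i) (integrable_const m), hmean i, integral_const]
    simp
  -- integrability of inner products
  have hinner_int : ∀ i j, Integrable (fun ω => (inner ℝ (Z i ω) (Z j ω) : ℝ)) μ := by
    intro i j
    refine Integrable.mono ((hL2 i).add (hL2 j))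
      ((hZint i).aestronglyMeasurable.inner (hZint j).aestronglyMeasurable)
      (Filter.Eventually.of_forall fun ω => ?_)
    have h1 := abs_real_inner_le_norm (Z i ω) (Z j ω)
    have h2 : ‖Z i ω‖ * ‖Z j ω‖ ≤ ‖Z i ω‖^2 + ‖Z j ω‖^2 := by
      nlinarith [norm_nonneg (Z i ω), norm_nonneg (Z j ω), sq_nonneg (‖Z i ω‖ - ‖Z j ω‖)]
    simp only [Real.norm_eq_abs, Pi.add_apply]
    rw [abs_of_nonneg (by positivity : (0:ℝ) ≤ ‖X i ω - m‖^2 + ‖X j ω - m‖^2)]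
    exact h1.trans h2
  -- cross expectations vanish
  have hproj : ∀ (t : Fin d) i, Integrable (fun ω => Z i ω t) μ := fun t i =>
    (EuclideanSpace.proj t : EuclideanSpace ℝ (Fin d) →L[ℝ] ℝ).integrable_comp (hZint i)
  have hprojmean : ∀ (t : Fin d) i, ∫ ω, Z i ω t ∂μ = 0 := by
    intro t i
    have := (EuclideanSpace.proj t :
      EuclideanSpace ℝ (Fin d) →L[ℝ] ℝ).integral_comp_comm (hZint i)
    rw [hZmean i] at this
    simpa using this
  have hcross : ∀ i j, i ≠ j → ∫ ω, (inner ℝ (Z i ω) (Z j ω) : ℝ) ∂μ = 0 := by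
    intro i j hij
    have hmZ : Measurable (fun x : EuclideanSpace ℝ (Fin d) => x - m) :=
      measurable_id.sub_const m
    have hindep2 : ∀ t : Fin d, IndepFun (fun ω => Z i ω t) (fun ω => Z j ω t) μ := by
      intro t
      exact ((hindep.indepFun hij).comp
        ((EuclideanSpace.proj t : EuclideanSpace ℝ (Fin d) →L[ℝ] ℝ).continuous.measurable.comp hmZ)
        ((EuclideanSpace.proj t : EuclideanSpace ℝ (Fin d) →L[ℝ] ℝ).continuous.measurable.comp hmZ) : _)
    have hrw : ∀ ω, (inner ℝ (Z i ω) (Z j ω) : ℝ) = ∑ t, Z i ω t * Z j ω t := by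
      intro ω; simp [PiLp.inner_apply, RCLike.inner_apply, mul_comm]
    simp_rw [hrw]
    have hmint : ∀ t : Fin d, Integrable (fun ω => Z i ω t * Z j ω t) μ := fun t =>
      (hindep2 t).integrable_mul (hproj t i) (hproj t j)
    rw [integral_finset_sum _ fun t _ => hmint t]
    refine Finset.sum_eq_zero fun t _ => ?_
    have hmul : ∫ ω, Z i ω t * Z j ω t ∂μ = (∫ ω, Z i ω t ∂μ) * ∫ ω, Z j ω t ∂μ :=
      (hindep2 t).integral_fun_mul_eq_mul_integral (hproj t i).aestronglyMeasurable
        (hproj t j).aestronglyMeasurable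
    rw [hmul, hprojmean t i]
    ring
  -- the coefficient vector
  set a : Fin K → ℝ := fun i => if i = k then 1 else -c with ha
  have hcard : (Finset.univ.erase k).card = K - 1 := by
    rw [Finset.card_erase_of_mem (Finset.mem_univ k), Finset.card_univ, Fintype.card_fin]
  have hKcast : ((K - 1 : ℕ) : ℝ) = (K:ℝ) - 1 := by
    have h1 : 1 ≤ K := le_trans one_le_two hK
    push_cast [Nat.cast_sub h1]
    ring
  have hc1 : c * ((K:ℝ) - 1) = 1 := inv_mul_cancel₀ hK1
  have key : ∀ ω, X k ω - c • ∑ i ∈ Finset.univ.erase k, X i ω = ∑ i, a i • Z i ω := by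
    intro ω
    rw [← Finset.add_sum_erase _ (fun i => a i • Z i ω) (Finset.mem_univ k)]
    have h1 : a k = 1 := if_pos rfl
    have h2 : ∑ i ∈ Finset.univ.erase k, a i • Z i ω
        = (-c) • ∑ i ∈ Finset.univ.erase k, Z i ω := by
      rw [Finset.smul_sum]
      refine Finset.sum_congr rfl fun i hi => ?_
      rw [show a i = -c from if_neg (Finset.ne_of_mem_erase hi)]
    have h3 : ∑ i ∈ Finset.univ.erase k, Z i ω
        = (∑ i ∈ Finset.univ.erase k, X i ω) - ((K:ℝ) - 1) • m := by
      rw [show (fun i => Z i ω) = fun i => X i ω - m from rfl] at *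
      rw [Finset.sum_sub_distrib, Finset.sum_const, hcard,
        ← Nat.cast_smul_eq_nsmul ℝ, hKcast]
    rw [h1, h2, h3, one_smul, neg_smul, smul_sub, smul_smul, hc1, one_smul]
    show X k ω - c • _ = (X k ω - m) + _
    abel
  -- expansion of the squared norm
  have hexp : ∀ ω, ‖∑ i, a i • Z i ω‖^2
      = ∑ i, ∑ j, (a i * a j) * (inner ℝ (Z i ω) (Z j ω) : ℝ) := by
    intro ω
    rw [← real_inner_self_eq_norm_sq, sum_inner]
    refine Finset.sum_congr rfl fun i _ => ?_
    rw [inner_sum]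
    refine Finset.sum_congr rfl fun j _ => ?_
    rw [real_inner_smul_left, real_inner_smul_right]
    ring
  have hterm_int : ∀ i, Integrable
      (fun ω => ∑ j, (a i * a j) * (inner ℝ (Z i ω) (Z j ω) : ℝ)) μ := fun i =>
    integrable_finset_sum _ fun j _ => (hinner_int i j).const_mul _
  have hV_int : Integrable
      (fun ω => ‖X k ω - c • ∑ i ∈ Finset.univ.erase k, X i ω‖^2) μ := by
    simp_rw [key, hexp]
    exact integrable_finset_sum _ fun i _ => hterm_int i
  -- the variance computation
  have hvar' : ∀ i, ∫ ω, (inner ℝ (Z i ω) (Z i ω) : ℝ) ∂μ = if i = k then σ2/s else σ2/ν := by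
    intro i
    simp_rw [real_inner_self_eq_norm_sq]
    by_cases hik : i = k
    · subst hik; simp [hZdef, hvark]
    · simp [hZdef, hik, hvar i hik]
  have hI : ∫ ω, ‖X k ω - c • ∑ i ∈ Finset.univ.erase k, X i ω‖^2 ∂μ
      = σ2/s + c * (σ2/ν) := by
    simp_rw [key, hexp]
    rw [integral_finset_sum _ fun i _ => hterm_int i]
    have hrow : ∀ i, ∫ ω, ∑ j, (a i * a j) * (inner ℝ (Z i ω) (Z j ω) : ℝ) ∂μ
        = (a i)^2 * (if i = k then σ2/s else σ2/ν) := by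
      intro i
      rw [integral_finset_sum _ fun j _ => (hinner_int i j).const_mul _]
      rw [Finset.sum_eq_single i]
      · rw [integral_const_mul, hvar' i]; ring
      · intro j _ hji
        rw [integral_const_mul, hcross i j (Ne.symm hji), mul_zero]
      · intro habs; exact absurd (Finset.mem_univ i) habs
    simp_rw [hrow]
    rw [← Finset.add_sum_erase _ _ (Finset.mem_univ k)]
    have h1 : (a k)^2 * (if k = k then σ2/s else σ2/ν) = σ2/s := by
      simp [ha]
    have h2 : ∑ i ∈ Finset.univ.erase k, (a i)^2 * (if i = k then σ2/s else σ2/ν)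
        = ((K:ℝ) - 1) * (c^2 * (σ2/ν)) := by
      rw [Finset.sum_congr rfl (fun i hi => ?_), Finset.sum_const, hcard,
        nsmul_eq_mul, hKcast]
      rw [if_neg (Finset.ne_of_mem_erase hi), show a i = -c from if_neg (Finset.ne_of_mem_erase hi)]
      ring
    rw [h1, h2]
    have : ((K:ℝ) - 1) * (c^2 * (σ2/ν)) = c * (σ2/ν) := by
      rw [hc]; field_simp
    rw [this]
  -- putting it together
  set f : Ω → ℝ := fun ω => ‖X k ω - c • ∑ i ∈ Finset.univ.erase k, X i ω‖^2 with hf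
  set A : ℝ := (ν : ℝ) * ((K:ℝ) / ((K : ℝ) - 1)) with hA
  set B : ℝ := (ν : ℝ) ^ 2 / σ2 with hB
  have hsplit : ∫ ω, (h ν + h' ν * (A - B * f ω)) ∂μ
      = (h ν + h' ν * A) - (h' ν * B) * (∫ ω, f ω ∂μ) := by
    have : (fun ω => h ν + h' ν * (A - B * f ω))
        = fun ω => (h ν + h' ν * A) - (h' ν * B) * f ω := by
      funext ω; ring
    rw [this, integral_sub (integrable_const _) (hV_int.const_mul _),
      integral_const, integral_const_mul]
    simp
  rw [hsplit, hI]
  have harith : (ν:ℝ) * ((K:ℝ)/((K:ℝ)-1)) - (ν:ℝ)^2/σ2 * (σ2/s + c*(σ2/ν))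
      = (ν:ℝ) * (1 - (ν:ℝ)/s) := by
    rw [hc]
    field_simp
    ring
  rw [hA, hB]
  linear_combination h' ↑ν * harith
end

section
/- (Theorem 1, cooperative Nash equilibrium) Let $K \geq 2$, $\sigma^2 > 0$, $\nu \in \{1,\dots,n\}$, and let $h:\mathbb{R}_{>0}\to\mathbb{R}$ be twice differentiable, strictly increasing ($h'>0$) and convex ($h''\geq 0$), extended by $h(0)=0$ with $h(s)>0$ for $s>0$. For each agent $k$ and deviation $s \in \{0,1,\dots,n\}$ (with other agents at $\nu$), the expected utility is $u_k(s) = h(\nu) + \nu h'(\nu)(1 - \nu/s) - h(s)$ for $s \geq 1$ and $u_k(0) = 0$. Then $u_k(\nu) = 0 \geq u_k(s)$ for all $s \in \{0,1,\dots,n\}$; i.e., the cooperative choice $s = \nu$ is a best response. -/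
/-- **Theorem 1, cooperative Nash equilibrium.** With the cost function
`h` twice differentiable, strictly increasing and convex on `ℝ>0`, `h(0) = 0`,
`h > 0` on `ℝ>0`, and the expected utility `u(s) = h(ν) + ν h'(ν)(1 - ν/s) - h(s)` for
integer deviations `1 ≤ s ≤ n` and `u(0) = 0` for nonparticipation, the cooperative
choice `s = ν` is a best response: `u(ν) = 0 ≥ u(s)` for all `s ∈ {0,…,n}`. -/
theorem cooperative_nash_equilibrium
    (h h' h'' : ℝ → ℝ)
    (hd1 : ∀ t > (0:ℝ), HasDerivAt h (h' t) t)
    (hd2 : ∀ t > (0:ℝ), HasDerivAt h' (h'' t) t)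
    (hpos : ∀ t > (0:ℝ), 0 < h' t)
    (hconv : ∀ t > (0:ℝ), 0 ≤ h'' t)
    (h0 : h 0 = 0) (hposval : ∀ t > (0:ℝ), 0 < h t)
    (n ν : ℕ) (hν1 : 1 ≤ ν) (hνn : ν ≤ n)
    (u : ℕ → ℝ)
    (hu0 : u 0 = 0)
    (hu : ∀ s : ℕ, 1 ≤ s → u s = h ν + ν * h' ν * (1 - (ν : ℝ) / s) - h s) :
    u ν = 0 ∧ ∀ s : ℕ, s ≤ n → u s ≤ u ν := by
  have hν0 : (0:ℝ) < (ν:ℝ) := by exact_mod_cast hν1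
  have huν : u ν = 0 := by
    rw [hu ν hν1, div_self (ne_of_gt hν0)]; ring
  refine ⟨huν, ?_⟩
  intro s hsn
  rw [huν]
  rcases Nat.eq_zero_or_pos s with hs0 | hs1
  · rw [hs0, hu0]
  have hs0 : (0:ℝ) < (s:ℝ) := by exact_mod_cast hs1
  rw [hu s hs1]
  set c : ℝ := (ν:ℝ) * (ν:ℝ) * h' ν with hc
  have hcpos : 0 ≤ c := le_of_lt (by have := hpos _ hν0; positivity)
  set g : ℝ → ℝ := fun t => h t + c / t with hg
  have hgd : ∀ t > (0:ℝ), HasDerivAt g (h' t - c / t ^ 2) t := by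
    intro t ht
    have h1 : HasDerivAt (fun t : ℝ => c / t) (-(c / t ^ 2)) t := by
      have := (hasDerivAt_inv (ne_of_gt ht)).const_mul c
      simpa [div_eq_mul_inv, neg_div, mul_comm] using this
    rw [sub_eq_add_neg]; exact (hd1 t ht).add h1
  -- h' monotone on Ioi 0
  have hmono : MonotoneOn h' (Set.Ioi (0:ℝ)) := by
    apply monotoneOn_of_deriv_nonneg (convex_Ioi 0)
    · exact fun t ht => (hd2 t ht).continuousAt.continuousWithinAt
    · intro t ht
      rw [interior_Ioi] at ht
      exact (hd2 t ht).differentiableAt.differentiableWithinAt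
    · intro t ht
      rw [interior_Ioi] at ht
      rw [(hd2 t ht).deriv]
      exact hconv t ht
  -- key inequality : g ν ≤ g s
  have key : g ν ≤ g s := by
    rcases le_total (s:ℝ) (ν:ℝ) with hle | hle
    · -- g antitone on Icc s ν, since there 0 < t ≤ ν
      have hanti : AntitoneOn g (Set.Icc (s:ℝ) (ν:ℝ)) := by
        apply antitoneOn_of_deriv_nonpos (convex_Icc _ _)
        · intro t ht
          exact (hgd t (lt_of_lt_of_le hs0 ht.1)).continuousAt.continuousWithinAt
        · intro t ht
          rw [interior_Icc] at ht
          exact (hgd t (lt_trans hs0 ht.1)).differentiableAt.differentiableWithinAt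
        · intro t ht
          rw [interior_Icc] at ht
          have ht0 : (0:ℝ) < t := lt_trans hs0 ht.1
          rw [(hgd t ht0).deriv]
          have h1 : h' t ≤ h' ν := hmono (Set.mem_Ioi.2 ht0) (Set.mem_Ioi.2 hν0) (le_of_lt ht.2)
          have h2 : h' ν ≤ c / t ^ 2 := by
            rw [le_div_iff₀ (by positivity), hc]
            have ht2 : t ^ 2 ≤ (ν:ℝ) ^ 2 := by
              apply pow_le_pow_left₀ (le_of_lt ht0) (le_of_lt ht.2)
            nlinarith [hpos _ hν0]
          linarith
      exact hanti (Set.mem_Icc.2 ⟨le_refl _, hle⟩) (Set.mem_Icc.2 ⟨hle, le_refl _⟩) hle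
    · -- g monotone on Icc ν s
      have hmon : MonotoneOn g (Set.Icc (ν:ℝ) (s:ℝ)) := by
        apply monotoneOn_of_deriv_nonneg (convex_Icc _ _)
        · intro t ht
          exact (hgd t (lt_of_lt_of_le hν0 ht.1)).continuousAt.continuousWithinAt
        · intro t ht
          rw [interior_Icc] at ht
          exact (hgd t (lt_trans hν0 ht.1)).differentiableAt.differentiableWithinAt
        · intro t ht
          rw [interior_Icc] at ht
          have ht0 : (0:ℝ) < t := lt_trans hν0 ht.1
          rw [(hgd t ht0).deriv]
          have h1 : h' ν ≤ h' t := hmono (Set.mem_Ioi.2 hν0) (Set.mem_Ioi.2 ht0) (le_of_lt ht.1)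
          have h2 : c / t ^ 2 ≤ h' ν := by
            rw [div_le_iff₀ (by positivity), hc]
            have ht2 : (ν:ℝ) ^ 2 ≤ t ^ 2 := by
              apply pow_le_pow_left₀ (le_of_lt hν0) (le_of_lt ht.1)
            nlinarith [hpos _ hν0]
          linarith
      exact hmon (Set.mem_Icc.2 ⟨le_refl _, hle⟩) (Set.mem_Icc.2 ⟨hle, le_refl _⟩) hle
  -- unfold g and conclude
  have : h (ν:ℝ) + c / (ν:ℝ) ≤ h (s:ℝ) + c / (s:ℝ) := key
  have hcν : c / (ν:ℝ) = (ν:ℝ) * h' ν := by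
    rw [hc]; field_simp
  have hcs : (ν:ℝ) * h' ν * ((ν:ℝ) / (s:ℝ)) = c / (s:ℝ) := by
    rw [hc]; field_simp
  have expand : (ν:ℝ) * h' ν * (1 - (ν:ℝ) / (s:ℝ)) = (ν:ℝ) * h' ν - c / (s:ℝ) := by
    rw [← hcs]; ring
  rw [expand]
  linarith [this, hcν.symm.le]
end
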